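/- arXiv:1104.2647 — 2 statements merged into one kernel-verified Lean document; each statement's English description precedes it below -/
import Mathlib

section
/- Let B be an m×m real matrix, c, d ∈ ℝ^m, and define x(t) = e^{(t−t₀)B} y₀ + e^{tB} ∫_{t₀}^{t} e^{−sB}(e^{−sBᵀ} d + c) ds. Then x satisfies x''(t) = Bᵀ(Bx(t) + c) + Bx'(t) − Bᵀx'(t) for all t, and x(t₀) = y₀. -/
open Matrix intervalIntegral

attribute [local instance] Matrix.linftyOpNormedAddCommGroup Matrix.linftyOpNormedRing
  Matrix.linftyOpNormedAlgebra

open NormedSpace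

namespace Stmt4Aux

variable {m : ℕ}

/-- `M ↦ (v ↦ M *ᵥ v)` as a continuous linear map. -/
noncomputable def Φ : Matrix (Fin m) (Fin m) ℝ →L[ℝ] (Fin m → ℝ) →L[ℝ] (Fin m → ℝ) :=
  LinearMap.toContinuousLinearMap
    (((LinearMap.toContinuousLinearMap :
        ((Fin m → ℝ) →ₗ[ℝ] (Fin m → ℝ)) ≃ₗ[ℝ] ((Fin m → ℝ) →L[ℝ] (Fin m → ℝ))).toLinearMap).comp
      (Matrix.toLin' : Matrix (Fin m) (Fin m) ℝ ≃ₗ[ℝ] _).toLinearMap)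

@[simp] theorem Φ_apply (M : Matrix (Fin m) (Fin m) ℝ) (v : Fin m → ℝ) :
    Φ M v = M *ᵥ v := by
  simp [Φ, Matrix.toLin'_apply]

theorem hasDerivAt_exp_smul_mulVec (B : Matrix (Fin m) (Fin m) ℝ) {G : ℝ → Fin m → ℝ}
    {G' : Fin m → ℝ} {τ : ℝ} (hG : HasDerivAt G G' τ) :
    HasDerivAt (fun t => (exp (t • B)) *ᵥ G t)
      (B *ᵥ ((exp (τ • B)) *ᵥ G τ) + (exp (τ • B)) *ᵥ G') τ := by
  have hc : HasDerivAt (fun t : ℝ => Φ (exp (t • B))) (Φ (B * exp (τ • B))) τ :=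
    Φ.hasFDerivAt.comp_hasDerivAt τ (hasDerivAt_exp_smul_const' B τ)
  have h := hc.clm_apply hG
  simpa [Matrix.mulVec_mulVec] using h

theorem exp_continuous_smul (B : Matrix (Fin m) (Fin m) ℝ) :
    Continuous fun t : ℝ => exp (t • B) := by
  refine continuous_iff_continuousAt.2 fun t => ?_
  exact (hasDerivAt_exp_smul_const' B t).continuousAt

end Stmt4Aux

open Stmt4Aux

/-- The curve `x(t) = e^{(t−t₀)B} y₀ + e^{tB} ∫_{t₀}^{t} e^{−sB}(e^{−sBᵀ} d + c) ds`
solves the Euler–Lagrange equation `x'' = Bᵀ(Bx + c) + Bx' − Bᵀx'` for the affine prior field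
`A(y) = By + c`, with `x(t₀) = y₀`. -/
theorem stmt4 {m : ℕ} (B : Matrix (Fin m) (Fin m) ℝ) (c d y₀ : Fin m → ℝ) (t₀ : ℝ)
    (x : ℝ → Fin m → ℝ)
    (hxdef : ∀ t, x t =
      (NormedSpace.exp ((t - t₀) • B)).mulVec y₀ +
      (NormedSpace.exp (t • B)).mulVec
        (∫ s in t₀..t,
          (NormedSpace.exp (-(s • B))).mulVec
            ((NormedSpace.exp (-(s • Bᵀ))).mulVec d + c))) :
    x t₀ = y₀ ∧
    ∀ t, deriv (deriv x) t =
      Bᵀ.mulVec (B.mulVec (x t) + c) + B.mulVec (deriv x t) - Bᵀ.mulVec (deriv x t) := by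
  classical
  set f : ℝ → Fin m → ℝ :=
    fun s => (exp (s • (-B))) *ᵥ ((exp (s • (-Bᵀ))) *ᵥ d + c) with hf
  set F : ℝ → Fin m → ℝ := fun t => ∫ s in t₀..t, f s with hFdef
  set w : ℝ → Fin m → ℝ := fun t => (exp (t • (-Bᵀ))) *ᵥ d + c with hw
  have hx : ∀ t, x t = (exp ((t - t₀) • B)) *ᵥ y₀ + (exp (t • B)) *ᵥ F t := by
    intro t
    rw [hxdef t]
    simp only [hFdef, hf, ← smul_neg]
  -- continuity of f
  have hcontf : Continuous f := by
    have h1 : Continuous fun s : ℝ => exp (s • (-Bᵀ)) *ᵥ d + c := by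
      have : Continuous fun s : ℝ => Φ (exp (s • (-Bᵀ))) d :=
        Φ.continuous₂.comp ((exp_continuous_smul (-Bᵀ)).prodMk continuous_const)
      simp only [Φ_apply] at this
      exact this.add continuous_const
    have h2 := exp_continuous_smul (-B)
    have : Continuous fun s : ℝ =>
        Φ (exp (s • (-B))) ((exp (s • (-Bᵀ))) *ᵥ d + c) :=
      Φ.continuous₂.comp (h2.prodMk h1)
    simpa [hf] using this
  have hF : ∀ t, HasDerivAt F (f t) t := fun t =>
    (hcontf.integral_hasStrictDerivAt t₀ t).hasDerivAt
  -- exp (t • B) * exp (t • (-B)) = 1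
  have hexpinv : ∀ (M : Matrix (Fin m) (Fin m) ℝ) (t : ℝ),
      exp (t • M) * exp (t • (-M)) = 1 := by
    intro M t
    rw [smul_neg, ← Matrix.exp_add_of_commute _ _ ((Commute.refl (t • M)).neg_right)]
    simp
  -- first derivative
  have hx' : ∀ t, HasDerivAt x (B *ᵥ x t + w t) t := by
    intro t
    have h1 : HasDerivAt (fun u : ℝ => (exp ((u - t₀) • B)) *ᵥ y₀)
        (B *ᵥ ((exp ((t - t₀) • B)) *ᵥ y₀)) t := by
      have houter := hasDerivAt_exp_smul_mulVec B (hasDerivAt_const (t - t₀) y₀)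
      have := houter.scomp t ((hasDerivAt_id t).sub_const t₀)
      simp at this ⊢
      exact this
    have h2 := hasDerivAt_exp_smul_mulVec B (hF t)
    have hsum := h1.add h2
    have hderiv : HasDerivAt x
        (B *ᵥ ((exp ((t - t₀) • B)) *ᵥ y₀) +
          (B *ᵥ ((exp (t • B)) *ᵥ F t) + (exp (t • B)) *ᵥ f t)) t := by
      refine HasDerivAt.congr_of_eventuallyEq hsum ?_
      exact Filter.Eventually.of_forall fun u => (hx u)
    have hcollect : (exp (t • B)) *ᵥ f t = w t := by
      simp only [hf, hw, Matrix.mulVec_mulVec, hexpinv B t, Matrix.one_mulVec]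
    rw [hx t]
    simpa [Matrix.mulVec_add, hcollect, add_assoc] using hderiv
  have hderivx : deriv x = fun t => B *ᵥ x t + w t := funext fun t => (hx' t).deriv
  refine ⟨?_, ?_⟩
  · rw [hxdef t₀]
    simp
  · intro t
    have h1 : HasDerivAt (fun u : ℝ => B *ᵥ x u) (B *ᵥ (B *ᵥ x t + w t)) t := by
      have := (Φ B).hasFDerivAt.comp_hasDerivAt t (hx' t)
      simp at this ⊢
      exact this
    have h2 : HasDerivAt (fun u : ℝ => (exp (u • (-Bᵀ))) *ᵥ d + c)
        ((-Bᵀ) *ᵥ ((exp (t • (-Bᵀ))) *ᵥ d)) t := by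
      have := (hasDerivAt_exp_smul_mulVec (-Bᵀ) (hasDerivAt_const t d)).add_const c
      simpa using this
    have hsum : HasDerivAt (deriv x)
        (B *ᵥ (B *ᵥ x t + w t) + (-Bᵀ) *ᵥ ((exp (t • (-Bᵀ))) *ᵥ d)) t := by
      rw [hderivx]
      exact h1.add h2
    rw [hsum.deriv, hderivx]
    simp only [hw, Matrix.mulVec_add, Matrix.mulVec_sub, Matrix.neg_mulVec]
    abel
end

section
/- Fix real constants β, ε with ε > 0, λ with 0 < λ² < 1, and v₀, ψ₀ ∈ ℝ. Define ψ(t) = ψ₀ + tβ + arctan(√(1−λ²) tan(tε + v₀)) (on an interval where tan is defined) and x(t) = ( √(1 − λ² sin²(tε+v₀)) cos ψ(t), √(1 − λ² sin²(tε+v₀)) sin ψ(t), λ sin(tε+v₀) ). Then x(t) lies on the unit sphere S² for all t, and ψ'(t) = β + c/(1 − x₃(t)²) with c = ε√(1−λ²), and (x₃')² = ε²(λ² − x₃²). -/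
open Real

/-- For `0 < λ² < 1`, `ε > 0`, the spherical curve
`x(t) = (√(1−λ²sin²(tε+v₀)) cos ψ(t), √(1−λ²sin²(tε+v₀)) sin ψ(t), λ sin(tε+v₀))` with
`ψ(t) = ψ₀ + tβ + arctan(√(1−λ²) tan(tε+v₀))` lies on `S²`, satisfies
`ψ' = β + c/(1 − x₃²)` with `c = ε√(1−λ²)` (where `tan` is defined), and
`(x₃')² = ε²(λ² − x₃²)`. -/
theorem stmt17 (β ε lam v₀ ψ₀ : ℝ) (hε : 0 < ε) (hlam : 0 < lam ^ 2 ∧ lam ^ 2 < 1) :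
    let ψ : ℝ → ℝ := fun t => ψ₀ + t * β + arctan (Real.sqrt (1 - lam ^ 2) * tan (t * ε + v₀))
    let x₃ : ℝ → ℝ := fun t => lam * sin (t * ε + v₀)
    let x₁ : ℝ → ℝ := fun t => Real.sqrt (1 - lam ^ 2 * (sin (t * ε + v₀)) ^ 2) * cos (ψ t)
    let x₂ : ℝ → ℝ := fun t => Real.sqrt (1 - lam ^ 2 * (sin (t * ε + v₀)) ^ 2) * sin (ψ t)
    (∀ t, (x₁ t) ^ 2 + (x₂ t) ^ 2 + (x₃ t) ^ 2 = 1) ∧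
    (∀ t, cos (t * ε + v₀) ≠ 0 →
      HasDerivAt ψ (β + ε * Real.sqrt (1 - lam ^ 2) / (1 - (x₃ t) ^ 2)) t) ∧
    (∀ t, (deriv x₃ t) ^ 2 = ε ^ 2 * (lam ^ 2 - (x₃ t) ^ 2)) := by
  obtain ⟨hl0, hl1⟩ := hlam
  intro ψ x₃ x₁ x₂
  have ha : (0:ℝ) ≤ 1 - lam ^ 2 := by linarith
  have hkey : ∀ t, 0 ≤ 1 - lam ^ 2 * (sin (t * ε + v₀)) ^ 2 := by
    intro t
    nlinarith [sin_sq_le_one (t * ε + v₀), sq_nonneg (sin (t * ε + v₀))]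
  refine ⟨?_, ?_, ?_⟩
  · intro t
    have h1 : Real.sqrt (1 - lam ^ 2 * (sin (t * ε + v₀)) ^ 2) ^ 2
        = 1 - lam ^ 2 * (sin (t * ε + v₀)) ^ 2 := Real.sq_sqrt (hkey t)
    have h2 := sin_sq_add_cos_sq (ψ t)
    simp only [x₁, x₂, x₃, mul_pow]
    nlinarith [h1, h2]
  · intro t hc
    set u := t * ε + v₀ with hu
    have htan : HasDerivAt (fun s : ℝ => tan (s * ε + v₀))
        ((1 / cos u ^ 2) * ε) t := by
      have h1 : HasDerivAt (fun s : ℝ => s * ε + v₀) ε t := by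
        simpa using ((hasDerivAt_id t).mul_const ε).add_const v₀
      exact (Real.hasDerivAt_tan hc).comp t h1
    have hmul : HasDerivAt (fun s : ℝ => Real.sqrt (1 - lam ^ 2) * tan (s * ε + v₀))
        (Real.sqrt (1 - lam ^ 2) * ((1 / cos u ^ 2) * ε)) t := htan.const_mul _
    have harc : HasDerivAt (fun s : ℝ => arctan (Real.sqrt (1 - lam ^ 2) * tan (s * ε + v₀)))
        ((1 / (1 + (Real.sqrt (1 - lam ^ 2) * tan u) ^ 2)) *
          (Real.sqrt (1 - lam ^ 2) * ((1 / cos u ^ 2) * ε))) t :=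
      (Real.hasDerivAt_arctan _).comp t hmul
    have hψ : HasDerivAt ψ
        (β + (1 / (1 + (Real.sqrt (1 - lam ^ 2) * tan u) ^ 2)) *
          (Real.sqrt (1 - lam ^ 2) * ((1 / cos u ^ 2) * ε))) t := by
      have hlin : HasDerivAt (fun s : ℝ => ψ₀ + s * β) β t := by
        simpa using (((hasDerivAt_id t).mul_const β).const_add ψ₀)
      exact hlin.add harc
    convert hψ using 2
    have hsq : Real.sqrt (1 - lam ^ 2) ^ 2 = 1 - lam ^ 2 := Real.sq_sqrt ha
    have hc2 : cos u ^ 2 ≠ 0 := pow_ne_zero 2 hc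
    have htandef : tan u = sin u / cos u := tan_eq_sin_div_cos u
    have hpyth : sin u ^ 2 + cos u ^ 2 = 1 := sin_sq_add_cos_sq u
    have hx3 : (x₃ t) ^ 2 = lam ^ 2 * sin u ^ 2 := by simp only [x₃, mul_pow, hu]
    have hden : 1 + (Real.sqrt (1 - lam ^ 2) * tan u) ^ 2
        = (1 - lam ^ 2 * sin u ^ 2) / cos u ^ 2 := by
      field_simp [htandef, mul_pow, hsq]
      rw [hsq, htandef, div_pow]
      field_simp
      linear_combination hpyth
    rw [hx3, hden]
    have hne : 1 - lam ^ 2 * sin u ^ 2 ≠ 0 := by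
      nlinarith [sin_sq_le_one u]
    field_simp
  · intro t
    have hd : HasDerivAt x₃ (lam * (cos (t * ε + v₀) * ε)) t := by
      have h1 : HasDerivAt (fun s : ℝ => s * ε + v₀) ε t := by
        simpa using ((hasDerivAt_id t).mul_const ε).add_const v₀
      exact ((Real.hasDerivAt_sin _).comp t h1).const_mul lam
    rw [hd.deriv]
    have hpyth : sin (t * ε + v₀) ^ 2 + cos (t * ε + v₀) ^ 2 = 1 :=
      sin_sq_add_cos_sq (t * ε + v₀)
    simp only [x₃]
    linear_combination (lam ^ 2 * ε ^ 2) * hpyth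
end
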